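/- Under common support, conditionally independent censoring, and correctly specified π_0, G, and outcome model, the scaled variance of the single-sample IPCW-IPS term equals E_{p(x)π_0(a|x)}[w(x,a)² σ²(x,a,t)] + E_{p(x)}[Var_{π_0(a|x)}[w(x,a)S(x,a,t)]] + Var_{p(x)}[S^{π_e}(x,t)], where w(x,a) = π_e(a|x)/π_0(a|x), σ²(x,a,t) = S(x,a,t)/G(t|x,a) − S(x,a,t)², and S^{π_e}(x,t) = Σ_a π_e(a|x) S(x,a,t). -/

import Mathlib

open MeasureTheory Finset

/-- Variance decomposition of the single-sample IPCW-IPS term. -/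
theorem ipcw_ips_variance
    {X A Ω : Type*} [Fintype X] [Fintype A] [MeasurableSpace Ω]
    (p : X → ℝ) (hp : ∀ x, 0 ≤ p x) (hp1 : ∑ x, p x = 1)
    (π0 πe : X → A → ℝ)
    (hπ0 : ∀ x a, 0 ≤ π0 x a) (hπ0s : ∀ x, ∑ a, π0 x a = 1)
    (hπe : ∀ x a, 0 ≤ πe x a) (hπes : ∀ x, ∑ a, πe x a = 1)
    (hsupp : ∀ x a, 0 < πe x a → 0 < π0 x a)
    (μ : X → A → Measure Ω) [∀ x a, IsProbabilityMeasure (μ x a)]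
    (L C : Ω → ℝ) (hL : Measurable L) (hC : Measurable C)
    (hInd : ∀ x a (s u : ℝ), μ x a {ω | s < L ω ∧ u < C ω} =
      μ x a {ω | s < L ω} * μ x a {ω | u < C ω})
    (t : ℝ)
    (S G : X → A → ℝ)
    (hS : ∀ x a, S x a = (μ x a {ω | t < L ω}).toReal)
    (hGdef : ∀ x a, G x a = (μ x a {ω | t < C ω}).toReal)
    (hG : ∀ x a, 0 < G x a)
    (w : X → A → ℝ) (hw : ∀ x a, w x a = πe x a / π0 x a) :
    (∑ x, p x * ∑ a, π0 x a *
        ∫ ω, (w x a *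
          Set.indicator {ω : Ω | t < min (L ω) (C ω)} (fun _ => (1 : ℝ)) ω / G x a) ^ 2 ∂(μ x a))
      - (∑ x, p x * ∑ a, π0 x a *
          ∫ ω, w x a *
            Set.indicator {ω : Ω | t < min (L ω) (C ω)} (fun _ => (1 : ℝ)) ω / G x a ∂(μ x a)) ^ 2
    = (∑ x, p x * ∑ a, π0 x a * (w x a ^ 2 * (S x a / G x a - S x a ^ 2)))
      + (∑ x, p x *
          ((∑ a, π0 x a * (w x a * S x a) ^ 2) - (∑ a, π0 x a * (w x a * S x a)) ^ 2))
      + ((∑ x, p x * (∑ a, πe x a * S x a) ^ 2) - (∑ x, p x * ∑ a, πe x a * S x a) ^ 2) := by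
  have hms : MeasurableSet {ω : Ω | t < min (L ω) (C ω)} := by
    have : {ω : Ω | t < min (L ω) (C ω)} = {ω | t < L ω} ∩ {ω | t < C ω} := by
      ext ω; simp [lt_min_iff, Set.mem_setOf_eq]
    rw [this]
    exact (measurableSet_lt measurable_const hL).inter
      (measurableSet_lt measurable_const hC)
  have hmeas : ∀ x a, (μ x a {ω : Ω | t < min (L ω) (C ω)}).toReal = S x a * G x a := by
    intro x a
    have h1 : {ω : Ω | t < min (L ω) (C ω)} = {ω | t < L ω ∧ t < C ω} := by
      ext ω; simp [lt_min_iff]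
    rw [h1, hInd x a t t, ENNReal.toReal_mul, hS, hGdef]
  have hGne : ∀ x a, G x a ≠ 0 := fun x a => (hG x a).ne'
  have key1 : ∀ x a,
      (∫ ω, (w x a * Set.indicator {ω : Ω | t < min (L ω) (C ω)} (fun _ => (1 : ℝ)) ω
          / G x a) ^ 2 ∂(μ x a)) = w x a ^ 2 * S x a / G x a := by
    intro x a
    have h1 : (fun ω => (w x a * Set.indicator {ω : Ω | t < min (L ω) (C ω)}
          (fun _ => (1 : ℝ)) ω / G x a) ^ 2)
        = Set.indicator {ω : Ω | t < min (L ω) (C ω)} (fun _ => (w x a / G x a) ^ 2) := by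
      funext ω
      by_cases h : ω ∈ {ω : Ω | t < min (L ω) (C ω)}
      · rw [Set.indicator_of_mem h, Set.indicator_of_mem h]; ring
      · rw [Set.indicator_of_notMem h, Set.indicator_of_notMem h]; ring
    rw [h1, integral_indicator_const _ hms, measureReal_def, hmeas, smul_eq_mul]
    field_simp [hGne x a]
  have key2 : ∀ x a,
      (∫ ω, w x a * Set.indicator {ω : Ω | t < min (L ω) (C ω)} (fun _ => (1 : ℝ)) ω
          / G x a ∂(μ x a)) = w x a * S x a := by
    intro x a
    have h1 : (fun ω => w x a * Set.indicator {ω : Ω | t < min (L ω) (C ω)}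
          (fun _ => (1 : ℝ)) ω / G x a)
        = Set.indicator {ω : Ω | t < min (L ω) (C ω)} (fun _ => w x a / G x a) := by
      funext ω
      by_cases h : ω ∈ {ω : Ω | t < min (L ω) (C ω)}
      · rw [Set.indicator_of_mem h, Set.indicator_of_mem h]; ring
      · rw [Set.indicator_of_notMem h, Set.indicator_of_notMem h]; ring
    rw [h1, integral_indicator_const _ hms, measureReal_def, hmeas, smul_eq_mul]
    field_simp [hGne x a]
  have hpe : ∀ x a, π0 x a * (w x a * S x a) = πe x a * S x a := by
    intro x a
    by_cases h : π0 x a = 0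
    · have hpe0 : πe x a = 0 := by
        by_contra hne
        have : 0 < πe x a := lt_of_le_of_ne (hπe x a) (Ne.symm hne)
        exact absurd (hsupp x a this) (by simp [h])
      simp [h, hpe0]
    · rw [hw]; field_simp
  have hinner : ∀ x, ∑ a, π0 x a * (w x a * S x a) = ∑ a, πe x a * S x a :=
    fun x => Finset.sum_congr rfl fun a _ => hpe x a
  simp only [key1, key2, hinner]
  have hmain : ∀ x, p x * ∑ a, π0 x a * (w x a ^ 2 * S x a / G x a)
      = (p x * ∑ a, π0 x a * (w x a ^ 2 * (S x a / G x a - S x a ^ 2)))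
        + (p x * ((∑ a, π0 x a * (w x a * S x a) ^ 2) - (∑ a, πe x a * S x a) ^ 2))
        + (p x * (∑ a, πe x a * S x a) ^ 2) := by
    intro x
    have hsum : ∑ a, π0 x a * (w x a ^ 2 * (S x a / G x a - S x a ^ 2))
        + ∑ a, π0 x a * (w x a * S x a) ^ 2
        = ∑ a, π0 x a * (w x a ^ 2 * S x a / G x a) := by
      rw [← Finset.sum_add_distrib]
      exact Finset.sum_congr rfl fun a _ => by ring
    rw [← hsum]; ring
  rw [Finset.sum_congr rfl fun x _ => hmain x, Finset.sum_add_distrib,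
    Finset.sum_add_distrib]
  ring
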